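/- Let 0 ≤ ℓ ≤ ℓ' be integers and let e be a boring extension of Σ*_ℓ = {u^0 <lex u^1 <lex ... <lex u^{n-1}}. Enumerate Σ*_{ℓ'} = {v^0 <lex v^1 <lex ... <lex v^{m-1}} and define the word e' of length m by e'_i = e_j, where j is the index with v^i|_ℓ = u^j. Then e' is a boring extension of Σ*_{ℓ'}. -/

import Mathlib

/-- The three-letter alphabet `Σ = {L, X, R}`. -/
inductive Sig : Type
  | L
  | X
  | R
  deriving DecidableEq

namespace Sig

def val : Sig → ℕ
  | L => 0
  | X => 1
  | R => 2

/-- The order `L <lex X <lex R` on letters. -/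
def le (a b : Sig) : Prop := a.val ≤ b.val

def lt (a b : Sig) : Prop := a.val < b.val

end Sig

/-- Finite words over the alphabet `Σ = {L, X, R}`. -/
abbrev Word : Type := List Sig

/-- The `i`-th letter of `w` (with a junk value out of range). -/
def idx (w : Word) (i : ℕ) : Sig := w.getD i Sig.L

/-- Strict lexicographic order on words: comparison at the first differing position, a
proper initial segment preceding its extensions. -/
def lexLt (u v : Word) : Prop :=
  (∃ i, i < u.length ∧ i < v.length ∧ Sig.lt (idx u i) (idx v i) ∧
    ∀ j < i, idx u j = idx v j) ∨
  (u.length < v.length ∧ ∀ j < u.length, idx u j = idx v j)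

def lexLe (u v : Word) : Prop := lexLt u v ∨ u = v

/-- The relation `≺`: there is `i < min(|u|,|v|)` with `(u_i, v_i) = (L, R)` and
`u_j ≤lex v_j` for all `j < i`. -/
def prec (u v : Word) : Prop :=
  ∃ i, i < u.length ∧ i < v.length ∧ idx u i = Sig.L ∧ idx v i = Sig.R ∧
    ∀ j < i, Sig.le (idx u j) (idx v j)

/-- The relation `⪯`. -/
def preceq (u v : Word) : Prop := prec u v ∨ u = v

/-- The relation `⊴`: element-wise comparison of words of the same length. -/
def trleq (u v : Word) : Prop :=
  u.length = v.length ∧ ∀ i < u.length, Sig.le (idx u i) (idx v i)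

/-- The relation `⊥`: `⊴`-incomparability. -/
def perp (u v : Word) : Prop := ¬ trleq u v ∧ ¬ trleq v u

/-- `u` and `v` are related if `u ⪯ v`, `v ⪯ u` or `u ⊥ v`. -/
def related (u v : Word) : Prop := preceq u v ∨ preceq v u ∨ perp u v

/-- The compatibility conditions for a pair `u ≤lex v`. -/
def compatPair (u v : Word) : Prop :=
  (∀ l < min u.length v.length, ¬ (idx u l = Sig.R ∧ idx v l = Sig.L)) ∧
  ((∃ l < min u.length v.length, idx u l = Sig.L ∧ idx v l = Sig.R) →
    ∀ l < min u.length v.length, Sig.le (idx u l) (idx v l))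

/-- `u` and `v` are compatible: the `≤lex`-smaller of the two satisfies the compatibility
conditions with the `≤lex`-larger. -/
def compatible (u v : Word) : Prop :=
  (lexLe u v ∧ compatPair u v) ∨ (lexLe v u ∧ compatPair v u)

/-- `S̄`: the segClosure of `S` under initial segments. -/
def segClosure (S : Set Word) : Set Word := {u | ∃ w ∈ S, u <+: w}

/-- Level `l` of a set of words. -/
def level (S : Set Word) (l : ℕ) : Set Word := {w | w ∈ S ∧ w.length = l}

/-- `S̄_l` : level `l` of the segClosure of `S`. -/
def cLevel (S : Set Word) (l : ℕ) : Set Word := level (segClosure S) l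

/-- Isomorphism of level structures `(A; ⪯, ⊴, ≤lex)`: a bijection preserving and
reflecting `⪯`, `⊴` and `≤lex`. -/
def LevelIso (A B : Set Word) : Prop :=
  ∃ e : Word → Word, Set.BijOn e A B ∧
    ∀ u ∈ A, ∀ v ∈ A,
      (preceq u v ↔ preceq (e u) (e v)) ∧
      (trleq u v ↔ trleq (e u) (e v)) ∧
      (lexLe u v ↔ lexLe (e u) (e v))

/-- A level `i` of `S` is interesting. -/
def Interesting (S : Set Word) (i : ℕ) : Prop :=
  ¬ LevelIso (cLevel S i) (cLevel S (i + 1)) ∨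
  (∃ u ∈ cLevel S (i + 1), ∃ v ∈ cLevel S (i + 1),
    ¬ compatible u v ∧ compatible (u.take i) (v.take i)) ∨
  (∃ u ∈ S, u.length = i)

/-- `τ_S(w)`: delete the characters of `w` whose indices are not interesting levels of `S`. -/
noncomputable def tauW (S : Set Word) (w : Word) : Word :=
  ((List.range w.length).filter
    (fun i => @decide (Interesting S i) (Classical.propDecidable _))).map (fun i => idx w i)

/-- A function is shape-preserving if it commutes with taking embedding types. -/
def ShapePreserving (S : Set Word) (f : Word → Word) : Prop :=
  ∀ w ∈ S, tauW S w = tauW (f '' S) (f w)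

/-- `A⌢c`. -/
def appendSet (A : Set Word) (c : Sig) : Set Word := (fun w => w ++ [c]) '' A

def LeafLevelAt (S : Set Word) (l : ℕ) (w : Word) : Prop :=
  w ∈ cLevel S l ∧ (∀ u ∈ cLevel S l, u ≠ w → related w u) ∧
  cLevel S (l + 1) = appendSet (cLevel S l \ {w}) Sig.X

def LeafLevel (S : Set Word) (l : ℕ) : Prop := ∃ w, LeafLevelAt S l w

def SplitLevelAt (S : Set Word) (l : ℕ) (w : Word) : Prop :=
  w ∈ cLevel S l ∧
  cLevel S (l + 1) =
    appendSet {z ∈ cLevel S l | lexLt z w} Sig.X ∪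
    {w ++ [Sig.X], w ++ [Sig.R]} ∪
    appendSet {z ∈ cLevel S l | lexLt w z} Sig.R

def SplitLevel (S : Set Word) (l : ℕ) : Prop := ∃ w, SplitLevelAt S l w

def NewPerpLevelAt (S : Set Word) (l : ℕ) (v w : Word) : Prop :=
  v ∈ cLevel S l ∧ w ∈ cLevel S l ∧ lexLt v w ∧ ¬ related v w ∧
  (∀ u ∈ cLevel S l, lexLt v u → lexLt u w → perp u v ∨ perp u w) ∧
  cLevel S (l + 1) =
    appendSet {z ∈ cLevel S l | lexLt z v} Sig.X ∪
    {v ++ [Sig.R]} ∪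
    appendSet {z ∈ cLevel S l | lexLt v z ∧ lexLt z w ∧ perp z v} Sig.X ∪
    appendSet {z ∈ cLevel S l | lexLt v z ∧ lexLt z w ∧ ¬ perp z v} Sig.R ∪
    {w ++ [Sig.X]} ∪
    appendSet {z ∈ cLevel S l | lexLt w z} Sig.R

def NewPerpLevel (S : Set Word) (l : ℕ) : Prop := ∃ v w, NewPerpLevelAt S l v w

def NewPrecLevelAt (S : Set Word) (l : ℕ) (v w : Word) : Prop :=
  v ∈ cLevel S l ∧ w ∈ cLevel S l ∧ lexLt v w ∧ ¬ related v w ∧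
  (∀ u ∈ cLevel S l, lexLt u v → preceq u w ∨ perp u v) ∧
  (∀ u ∈ cLevel S l, lexLt w u → preceq v u ∨ perp w u) ∧
  cLevel S (l + 1) =
    appendSet {z ∈ cLevel S l | lexLt z v ∧ perp z v} Sig.X ∪
    appendSet {z ∈ cLevel S l | lexLt z v ∧ ¬ perp z v} Sig.L ∪
    {v ++ [Sig.L]} ∪
    appendSet {z ∈ cLevel S l | lexLt v z ∧ lexLt z w} Sig.X ∪
    {w ++ [Sig.R]} ∪
    appendSet {z ∈ cLevel S l | lexLt w z ∧ perp w z} Sig.X ∪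
    appendSet {z ∈ cLevel S l | lexLt w z ∧ ¬ perp w z} Sig.R

def NewPrecLevel (S : Set Word) (l : ℕ) : Prop := ∃ v w, NewPrecLevelAt S l v w

def ExactlyOne (a b c d : Prop) : Prop :=
  (a ∧ ¬b ∧ ¬c ∧ ¬d) ∨ (¬a ∧ b ∧ ¬c ∧ ¬d) ∨ (¬a ∧ ¬b ∧ c ∧ ¬d) ∨ (¬a ∧ ¬b ∧ ¬c ∧ d)

/-- A poset-diary: an antichain under the initial segment relation such that on each level
below the supremum of lengths exactly one of the four critical events happens. -/
def PosetDiary (S : Set Word) : Prop :=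
  (∀ u ∈ S, ∀ v ∈ S, u <+: v → u = v) ∧
  ∀ l : ℕ, (∃ w ∈ S, l < w.length) →
    ExactlyOne (LeafLevel S l) (SplitLevel S l) (NewPerpLevel S l) (NewPrecLevel S l)

/-- `A⌢e`: extend each word of `A` by the letter that the extension `e` assigns to it. -/
def extSet (A : Set Word) (e : Word → Sig) : Set Word := (fun w => w ++ [e w]) '' A

/-- `e` is a boring extension of `A ⊆ Σ*_l` if level `l` is not an interesting level of
`A⌢e`. -/
def BoringExt (A : Set Word) (l : ℕ) (e : Word → Sig) : Prop :=
  ¬ Interesting (extSet A e) l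

/-! ### Auxiliary lemmas -/

section AuxLemmas

instance : Fintype Sig where
  elems := {Sig.L, Sig.X, Sig.R}
  complete := fun a => by cases a <;> simp

lemma Sig.le_refl' (a : Sig) : a.le a := Nat.le_refl _

lemma Sig.val_inj' {a b : Sig} (h : a.val = b.val) : a = b := by
  cases a <;> cases b <;> simp_all [Sig.val]

lemma Sig.lt_trichotomy' (a b : Sig) : a.lt b ∨ a = b ∨ b.lt a := by
  rcases Nat.lt_trichotomy a.val b.val with h | h | h
  · exact Or.inl h
  · exact Or.inr (Or.inl (Sig.val_inj' h))
  · exact Or.inr (Or.inr h)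

lemma Sig.lt_irrefl' (a : Sig) : ¬ a.lt a := Nat.lt_irrefl _

lemma idx_append_lt (w : Word) (c : Sig) {i : ℕ} (h : i < w.length) :
    idx (w ++ [c]) i = idx w i := by
  unfold idx
  rw [List.getD_eq_getElem?_getD, List.getD_eq_getElem?_getD, List.getElem?_append]
  simp [h]

lemma idx_append_self (w : Word) (c : Sig) : idx (w ++ [c]) w.length = c := by
  unfold idx
  rw [List.getD_eq_getElem?_getD, List.getElem?_concat_length]
  rfl

lemma idx_append_of_len {w : Word} (c : Sig) {n : ℕ} (h : w.length = n) :
    idx (w ++ [c]) n = c := h ▸ idx_append_self w c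

lemma idx_take {w : Word} {l i : ℕ} (h : i < l) : idx (w.take l) i = idx w i := by
  unfold idx
  rw [List.getD_eq_getElem?_getD, List.getD_eq_getElem?_getD, List.getElem?_take]
  simp [h]

lemma word_ext {u v : Word} (h : u.length = v.length)
    (h2 : ∀ i, i < u.length → idx u i = idx v i) : u = v := by
  apply List.ext_getElem h
  intro i h1 h3
  have := h2 i h1
  unfold idx at this
  rwa [List.getD_eq_getElem _ _ h1, List.getD_eq_getElem _ _ h3] at this

lemma lexLt_iff_of_len {u v : Word} (h : u.length = v.length) :
    lexLt u v ↔ ∃ i, i < u.length ∧ Sig.lt (idx u i) (idx v i) ∧ ∀ j < i, idx u j = idx v j := by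
  constructor
  · rintro (⟨i, h1, h2, h3, h4⟩ | ⟨h1, _⟩)
    · exact ⟨i, h1, h3, h4⟩
    · omega
  · rintro ⟨i, h1, h2, h3⟩
    exact Or.inl ⟨i, h1, h ▸ h1, h2, h3⟩

lemma lexLt_irrefl (u : Word) : ¬ lexLt u u := by
  rintro (⟨i, _, _, h, _⟩ | ⟨h, _⟩)
  · exact Sig.lt_irrefl' _ h
  · omega

lemma lexLt_trans_len {u v w : Word} (huv : u.length = v.length) (hvw : v.length = w.length)
    (h1 : lexLt u v) (h2 : lexLt v w) : lexLt u w := by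
  rw [lexLt_iff_of_len huv] at h1
  rw [lexLt_iff_of_len hvw] at h2
  rw [lexLt_iff_of_len (huv.trans hvw)]
  obtain ⟨i, hi, hlt, hpre⟩ := h1
  obtain ⟨j, hj, hlt', hpre'⟩ := h2
  rcases Nat.lt_trichotomy i j with hc | hc | hc
  · exact ⟨i, hi, (hpre' i hc) ▸ hlt, fun k hk => (hpre k hk).trans (hpre' k (hk.trans hc))⟩
  · subst hc
    exact ⟨i, hi, Nat.lt_trans hlt hlt', fun k hk => (hpre k hk).trans (hpre' k hk)⟩
  · refine ⟨j, by omega, ?_, fun k hk => (hpre k (hk.trans hc)).trans (hpre' k hk)⟩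
    rw [hpre j hc]
    exact hlt'

lemma lexLt_trichotomy_len {u v : Word} (h : u.length = v.length) :
    lexLt u v ∨ u = v ∨ lexLt v u := by
  classical
  by_cases hall : ∀ i, i < u.length → idx u i = idx v i
  · exact Or.inr (Or.inl (word_ext h hall))
  · push_neg at hall
    obtain ⟨i, hi, hne⟩ := hall
    have hex : ∃ n, n < u.length ∧ idx u n ≠ idx v n := ⟨i, hi, hne⟩
    set i0 := Nat.find hex with hi0
    have hspec := Nat.find_spec hex
    have hmin : ∀ j, j < i0 → idx u j = idx v j := by
      intro j hj
      by_contra hcon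
      exact Nat.find_min hex hj ⟨by omega, hcon⟩
    rcases Sig.lt_trichotomy' (idx u i0) (idx v i0) with hc | hc | hc
    · exact Or.inl ((lexLt_iff_of_len h).mpr ⟨i0, hspec.1, hc, hmin⟩)
    · exact absurd hc hspec.2
    · exact Or.inr (Or.inr ((lexLt_iff_of_len h.symm).mpr
        ⟨i0, by omega, hc, fun j hj => (hmin j hj).symm⟩))

lemma lexLt_append {u v : Word} (a b : Sig) (h : u.length = v.length) :
    lexLt (u ++ [a]) (v ++ [b]) ↔ lexLt u v ∨ (u = v ∧ Sig.lt a b) := by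
  have hl : (u ++ [a]).length = (v ++ [b]).length := by simp [h]
  rw [lexLt_iff_of_len hl, lexLt_iff_of_len h]
  constructor
  · rintro ⟨i, hi, hlt, hpre⟩
    simp only [List.length_append, List.length_singleton] at hi
    rcases Nat.lt_or_ge i u.length with hc | hc
    · left
      refine ⟨i, hc, ?_, fun j hj => ?_⟩
      · rwa [idx_append_lt _ _ hc, idx_append_lt _ _ (h ▸ hc)] at hlt
      · have := hpre j hj
        rwa [idx_append_lt _ _ (by omega), idx_append_lt _ _ (by omega : j < v.length)] at this
    · have hieq : i = u.length := by omega
      subst hieq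
      right
      constructor
      · apply word_ext h
        intro j hj
        have := hpre j hj
        rwa [idx_append_lt _ _ hj, idx_append_lt _ _ (h ▸ hj)] at this
      · rwa [idx_append_self, idx_append_of_len b h.symm] at hlt
  · rintro (⟨i, hi, hlt, hpre⟩ | ⟨rfl, hab⟩)
    · refine ⟨i, by simp only [List.length_append, List.length_singleton]; omega, ?_, fun j hj => ?_⟩
      · rwa [idx_append_lt _ _ hi, idx_append_lt _ _ (h ▸ hi)]
      · rw [idx_append_lt _ _ (hj.trans hi), idx_append_lt _ _ (h ▸ (hj.trans hi))]
        exact hpre j hj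
    · refine ⟨u.length, by simp, ?_, fun j hj => ?_⟩
      · rwa [idx_append_self, idx_append_self]
      · rw [idx_append_lt _ _ hj, idx_append_lt _ _ hj]

lemma trleq_append {u v : Word} (a b : Sig) (h : u.length = v.length) :
    trleq (u ++ [a]) (v ++ [b]) ↔ trleq u v ∧ Sig.le a b := by
  unfold trleq
  simp only [List.length_append, List.length_singleton]
  constructor
  · rintro ⟨hl, hp⟩
    refine ⟨⟨h, fun i hi => ?_⟩, ?_⟩
    · have := hp i (by omega)
      rwa [idx_append_lt _ _ hi, idx_append_lt _ _ (h ▸ hi)] at this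
    · have := hp u.length (by omega)
      rwa [idx_append_self, idx_append_of_len b h.symm] at this
  · rintro ⟨⟨_, hp⟩, hab⟩
    refine ⟨by omega, fun i hi => ?_⟩
    rcases Nat.lt_or_ge i u.length with hc | hc
    · rw [idx_append_lt _ _ hc, idx_append_lt _ _ (h ▸ hc)]
      exact hp i hc
    · have : i = u.length := by omega
      subst this
      rw [idx_append_self, idx_append_of_len b h.symm]
      exact hab

lemma prec_append {u v : Word} (a b : Sig) (h : u.length = v.length) :
    prec (u ++ [a]) (v ++ [b]) ↔
      prec u v ∨ ((∀ j, j < u.length → Sig.le (idx u j) (idx v j)) ∧ a = Sig.L ∧ b = Sig.R) := by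
  unfold prec
  constructor
  · rintro ⟨i, hi1, hi2, hL, hR, hpre⟩
    simp only [List.length_append, List.length_singleton] at hi1 hi2
    rcases Nat.lt_or_ge i u.length with hc | hc
    · left
      refine ⟨i, hc, h ▸ hc, by rwa [idx_append_lt _ _ hc] at hL,
        by rwa [idx_append_lt _ _ (h ▸ hc)] at hR, fun j hj => ?_⟩
      have := hpre j hj
      rwa [idx_append_lt _ _ (hj.trans hc), idx_append_lt _ _ (h ▸ (hj.trans hc))] at this
    · have hieq : i = u.length := by omega
      subst hieq
      right
      refine ⟨fun j hj => ?_, by rwa [idx_append_self] at hL,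
        by rwa [idx_append_of_len b h.symm] at hR⟩
      have := hpre j hj
      rwa [idx_append_lt _ _ hj, idx_append_lt _ _ (h ▸ hj)] at this
  · rintro (⟨i, hi1, hi2, hL, hR, hpre⟩ | ⟨hp, ha, hb⟩)
    · refine ⟨i, by simp only [List.length_append, List.length_singleton]; omega,
        by simp only [List.length_append, List.length_singleton]; omega,
        by rwa [idx_append_lt _ _ hi1], by rwa [idx_append_lt _ _ hi2], fun j hj => ?_⟩
      rw [idx_append_lt _ _ (hj.trans hi1), idx_append_lt _ _ (hj.trans hi2)]
      exact hpre j hj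
    · refine ⟨u.length, by simp, by simp only [List.length_append, List.length_singleton]; omega,
        by rwa [idx_append_self], by rwa [idx_append_of_len b h.symm], fun j hj => ?_⟩
      rw [idx_append_lt _ _ hj, idx_append_lt _ _ (h ▸ hj)]
      exact hp j hj

lemma trleq_take {u v : Word} {l : ℕ} (hu : l ≤ u.length) (h : trleq u v) :
    trleq (u.take l) (v.take l) := by
  obtain ⟨hl, hp⟩ := h
  refine ⟨by simp [List.length_take, hl], fun i hi => ?_⟩
  have hil : i < l := by simp only [List.length_take] at hi; omega
  rw [idx_take hil, idx_take hil]
  exact hp i (by omega)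

lemma lexLe_take {u v : Word} {l : ℕ} (h : u.length = v.length) (hu : l ≤ u.length)
    (hle : lexLe u v) : lexLe (u.take l) (v.take l) := by
  rcases hle with hlt | rfl
  · rw [lexLt_iff_of_len h] at hlt
    obtain ⟨i, hi, hv, hpre⟩ := hlt
    rcases Nat.lt_or_ge i l with hc | hc
    · left
      rw [lexLt_iff_of_len (by simp [List.length_take, h])]
      refine ⟨i, by simp only [List.length_take]; omega, ?_, fun j hj => ?_⟩
      · rwa [idx_take hc, idx_take hc]
      · rw [idx_take (hj.trans hc), idx_take (hj.trans hc)]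
        exact hpre j hj
    · right
      apply word_ext (by simp [List.length_take, h])
      intro j hj
      have hjl : j < l := by simp only [List.length_take] at hj; omega
      rw [idx_take hjl, idx_take hjl]
      exact hpre j (by omega)
  · exact Or.inr rfl

lemma compatPair_take {u v : Word} {l : ℕ} (h : u.length = v.length) (hu : l ≤ u.length)
    (hc : compatPair u v) : compatPair (u.take l) (v.take l) := by
  obtain ⟨h1, h2⟩ := hc
  have hmin : min (u.take l).length (v.take l).length = l := by
    simp only [List.length_take]; omega
  constructor
  · intro i hi
    rw [hmin] at hi
    rw [idx_take hi, idx_take hi]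
    exact h1 i (by omega)
  · rintro ⟨i, hi, hL, hR⟩ j hj
    rw [hmin] at hi hj
    rw [idx_take hi] at hL
    rw [idx_take hi] at hR
    rw [idx_take hj, idx_take hj]
    exact h2 ⟨i, by omega, hL, hR⟩ j (by omega)

lemma compatible_take {u v : Word} {l : ℕ} (h : u.length = v.length) (hu : l ≤ u.length)
    (hc : compatible u v) : compatible (u.take l) (v.take l) := by
  rcases hc with ⟨hle, hp⟩ | ⟨hle, hp⟩
  · exact Or.inl ⟨lexLe_take h hu hle, compatPair_take h hu hp⟩
  · exact Or.inr ⟨lexLe_take h.symm (h ▸ hu) hle, compatPair_take h.symm (h ▸ hu) hp⟩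

lemma compatPair_refl (u : Word) : compatPair u u := by
  constructor
  · rintro i hi ⟨h1, h2⟩
    rw [h1] at h2
    exact Sig.noConfusion h2
  · exact fun _ j _ => Sig.le_refl' _

lemma compatible_symm {u v : Word} (h : compatible u v) : compatible v u := h.symm

lemma compatPair_of_compatible_of_le {u v : Word} (h : u.length = v.length)
    (hc : compatible u v) (hle : lexLe u v) : compatPair u v := by
  rcases hc with ⟨_, hp⟩ | ⟨hle', hp⟩
  · exact hp
  · rcases hle with hlt | rfl
    · rcases hle' with hlt' | rfl
      · exact absurd (lexLt_trans_len h h.symm hlt hlt') (lexLt_irrefl _)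
      · exact hp
    · exact hp

lemma take_append_of_len {w : Word} (c : Sig) {n : ℕ} (h : w.length = n) :
    (w ++ [c]).take n = w := by
  subst h
  exact List.take_left

lemma cLevel_extSet_eq (n : ℕ) (f : Word → Sig) :
    cLevel (extSet {w : Word | w.length = n} f) n = {w : Word | w.length = n} := by
  ext w
  simp only [cLevel, level, segClosure, extSet, Set.mem_setOf_eq, Set.mem_image]
  constructor
  · rintro ⟨_, hlen⟩
    exact hlen
  · intro hlen
    exact ⟨⟨w ++ [f w], ⟨w, hlen, rfl⟩, List.prefix_append w [f w]⟩, hlen⟩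

lemma cLevel_extSet_succ (n : ℕ) (f : Word → Sig) :
    cLevel (extSet {w : Word | w.length = n} f) (n + 1) = extSet {w : Word | w.length = n} f := by
  ext w
  simp only [cLevel, level, segClosure, extSet, Set.mem_setOf_eq, Set.mem_image]
  constructor
  · rintro ⟨⟨y, ⟨x, hx, rfl⟩, hpre⟩, hlen⟩
    have : w = x ++ [f x] := hpre.eq_of_length (by simp [hx, hlen])
    exact ⟨x, hx, this.symm⟩
  · rintro ⟨x, hx, rfl⟩
    exact ⟨⟨x ++ [f x], ⟨x, hx, rfl⟩, List.prefix_refl _⟩, by simp [hx]⟩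

lemma image_lt_eq {A B : Set Word} (g : Word → Word) (hg : Set.BijOn g A B)
    (hord : ∀ u ∈ A, ∀ v ∈ A, (lexLe u v ↔ lexLe (g u) (g v)))
    {a : Word} (ha : a ∈ A) :
    {x ∈ B | lexLt x (g a)} = g '' {x ∈ A | lexLt x a} := by
  ext x
  constructor
  · rintro ⟨hxB, hxlt⟩
    obtain ⟨y, hyA, rfl⟩ := hg.surjOn hxB
    refine ⟨y, ⟨hyA, ?_⟩, rfl⟩
    have hle : lexLe y a := (hord y hyA a ha).mpr (Or.inl hxlt)
    rcases hle with h | rfl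
    · exact h
    · exact absurd hxlt (lexLt_irrefl _)
  · rintro ⟨y, ⟨hyA, hylt⟩, rfl⟩
    refine ⟨hg.mapsTo hyA, ?_⟩
    rcases (hord y hyA a ha).mp (Or.inl hylt) with h | heq
    · exact h
    · exact absurd (hg.injOn hyA ha heq ▸ hylt) (lexLt_irrefl _)

lemma pred_ncard_inj {B : Set Word} {m : ℕ} (hB : ∀ w ∈ B, w.length = m) (hBfin : B.Finite)
    {b₁ b₂ : Word} (h₁ : b₁ ∈ B) (h₂ : b₂ ∈ B)
    (h : {x ∈ B | lexLt x b₁}.ncard = {x ∈ B | lexLt x b₂}.ncard) : b₁ = b₂ := by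
  have key : ∀ c d : Word, c ∈ B → d ∈ B → lexLt c d →
      {x ∈ B | lexLt x c}.ncard < {x ∈ B | lexLt x d}.ncard := by
    intro c d hc hd hcd
    apply Set.ncard_lt_ncard
    · constructor
      · rintro x ⟨hx, hxc⟩
        exact ⟨hx, lexLt_trans_len ((hB x hx).trans (hB c hc).symm)
          ((hB c hc).trans (hB d hd).symm) hxc hcd⟩
      · intro hsub
        have : c ∈ {x ∈ B | lexLt x c} := hsub ⟨hc, hcd⟩
        exact lexLt_irrefl c this.2
    · exact hBfin.subset (Set.sep_subset _ _)
  have hlen : b₁.length = b₂.length := (hB _ h₁).trans (hB _ h₂).symm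
  rcases lexLt_trichotomy_len hlen with hlt | heq | hlt
  · exact absurd h (Nat.ne_of_lt (key _ _ h₁ h₂ hlt))
  · exact heq
  · exact absurd h.symm (Nat.ne_of_lt (key _ _ h₂ h₁ hlt))

lemma lex_iso_unique {A B : Set Word} {m : ℕ} (hB : ∀ w ∈ B, w.length = m)
    (hAfin : A.Finite)
    (g φ : Word → Word) (hg : Set.BijOn g A B) (hφ : Set.BijOn φ A B)
    (hgord : ∀ u ∈ A, ∀ v ∈ A, (lexLe u v ↔ lexLe (g u) (g v)))
    (hφord : ∀ u ∈ A, ∀ v ∈ A, (lexLe u v ↔ lexLe (φ u) (φ v)))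
    {a : Word} (ha : a ∈ A) : g a = φ a := by
  have hBfin : B.Finite := hg.image_eq ▸ hAfin.image g
  apply pred_ncard_inj hB hBfin (hg.mapsTo ha) (hφ.mapsTo ha)
  rw [image_lt_eq g hg hgord ha, image_lt_eq φ hφ hφord ha,
    Set.ncard_image_of_injOn (hg.injOn.mono (Set.sep_subset _ _)),
    Set.ncard_image_of_injOn (hφ.injOn.mono (Set.sep_subset _ _))]

end AuxLemmas

/-- a boring extension of the full level `Σ*_l` transfers, via restriction of
words to their initial segments of length `l`, to a boring extension of the full level
`Σ*_{l'}` for every `l' ≥ l`. -/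
theorem boring_extension_transfers (l l' : ℕ) (hll : l ≤ l') (e : Word → Sig)
    (hbor : BoringExt {w : Word | w.length = l} l e) :
    BoringExt {w : Word | w.length = l'} l' (fun v => e (v.take l)) := by
  classical
  unfold BoringExt Interesting at hbor ⊢
  have hcl1 := cLevel_extSet_eq l e
  have hcl2 := cLevel_extSet_succ l e
  have h1 : LevelIso {w : Word | w.length = l} (extSet {w : Word | w.length = l} e) := by
    have := not_not.mp (fun hc => hbor (Or.inl hc))
    rwa [hcl1, hcl2] at this
  have h2 : ∀ u ∈ extSet {w : Word | w.length = l} e, ∀ v ∈ extSet {w : Word | w.length = l} e,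
      compatible (u.take l) (v.take l) → compatible u v := by
    intro u hu v hv hc
    by_contra hnc
    refine hbor (Or.inr (Or.inl ⟨u, by rw [hcl2]; exact hu, v, by rw [hcl2]; exact hv, hnc, hc⟩))
  have hlex_app : ∀ (u v : Word) (a b : Sig), u.length = v.length → (u = v → a = b) →
      (lexLe u v ↔ lexLe (u ++ [a]) (v ++ [b])) := by
    intro u v a b h hab
    constructor
    · rintro (hlt | rfl)
      · exact Or.inl ((lexLt_append a b h).mpr (Or.inl hlt))
      · rw [hab rfl]
        exact Or.inr rfl
    · rintro (hlt | heq)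
      · rcases (lexLt_append a b h).mp hlt with hlt' | ⟨rfl, hl⟩
        · exact Or.inl hlt'
        · rw [hab rfl] at hl
          exact absurd hl (Sig.lt_irrefl' _)
      · exact Or.inr (List.append_inj' heq rfl).1
  have hφbij : Set.BijOn (fun w : Word => w ++ [e w]) {w : Word | w.length = l}
      (extSet {w : Word | w.length = l} e) := by
    refine ⟨fun w hw => ⟨w, hw, rfl⟩, fun u hu v hv heq => ?_, fun x hx => ?_⟩
    · exact (List.append_inj' heq rfl).1
    · obtain ⟨y, hy, rfl⟩ := hx
      exact ⟨y, hy, rfl⟩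
  obtain ⟨g, hgbij, hgprop⟩ := h1
  have hSlen : ∀ w ∈ extSet {w : Word | w.length = l} e, w.length = l + 1 := by
    rintro w ⟨x, hx, rfl⟩
    have hx' : x.length = l := hx
    simp [hx']
  have hAfin : ({w : Word | w.length = l} : Set Word).Finite := List.finite_length_eq Sig l
  have hgφ : ∀ p : Word, p.length = l → g p = p ++ [e p] := by
    intro p hp
    refine lex_iso_unique hSlen hAfin g (fun w => w ++ [e w]) hgbij hφbij
      (fun u hu v hv => (hgprop u hu v hv).2.2)
      (fun u hu v hv => ?_) hp
    have hu' : u.length = l := hu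
    have hv' : v.length = l := hv
    exact hlex_app u v (e u) (e v) (by omega) (fun h => by rw [h])
  have hF2 : ∀ p q : Word, p.length = l → q.length = l → trleq p q → Sig.le (e p) (e q) := by
    intro p q hp hq ht
    have := ((hgprop p hp q hq).2.1).mp ht
    rw [hgφ p hp, hgφ q hq] at this
    exact ((trleq_append _ _ (hp.trans hq.symm)).mp this).2
  have hF1 : ∀ p q : Word, p.length = l → q.length = l →
      (∀ j, j < l → Sig.le (idx p j) (idx q j)) → e p = Sig.L → e q = Sig.R → prec p q := by
    intro p q hp hq hle hL hR
    have hpre : preceq (g p) (g q) := by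
      rw [hgφ p hp, hgφ q hq]
      exact Or.inl ((prec_append _ _ (hp.trans hq.symm)).mpr
        (Or.inr ⟨fun j hj => hle j (by omega), hL, hR⟩))
    rcases ((hgprop p hp q hq).1).mpr hpre with hprec | heq
    · exact hprec
    · rw [heq] at hL
      rw [hL] at hR
      exact Sig.noConfusion hR
  have hF3 : ∀ p q : Word, p.length = l → q.length = l → compatible p q →
      compatible (p ++ [e p]) (q ++ [e q]) := by
    intro p q hp hq hc
    apply h2 _ ⟨p, hp, rfl⟩ _ ⟨q, hq, rfl⟩
    rwa [take_append_of_len _ hp, take_append_of_len _ hq]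
  -- facts at level l'
  have hcl1' := cLevel_extSet_eq l' (fun v => e (v.take l))
  have hcl2' := cLevel_extSet_succ l' (fun v => e (v.take l))
  have htakelen : ∀ u : Word, u.length = l' → (u.take l).length = l := by
    intro u hu
    simp only [List.length_take]
    omega
  have hK2 : ∀ u v : Word, u.length = l' → v.length = l' → trleq u v →
      Sig.le (e (u.take l)) (e (v.take l)) := by
    intro u v hu hv ht
    exact hF2 _ _ (htakelen u hu) (htakelen v hv) (trleq_take (by omega) ht)
  have hK1 : ∀ u v : Word, u.length = l' → v.length = l' →
      (∀ j, j < l' → Sig.le (idx u j) (idx v j)) →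
      e (u.take l) = Sig.L → e (v.take l) = Sig.R → prec u v := by
    intro u v hu hv hle hL hR
    have hple : ∀ j, j < l → Sig.le (idx (u.take l) j) (idx (v.take l) j) := by
      intro j hj
      rw [idx_take hj, idx_take hj]
      exact hle j (by omega)
    obtain ⟨i0, hi0u, hi0v, hiL, hiR, _⟩ :=
      hF1 _ _ (htakelen u hu) (htakelen v hv) hple hL hR
    rw [htakelen u hu] at hi0u
    rw [idx_take hi0u] at hiL
    rw [idx_take hi0u] at hiR
    exact ⟨i0, by omega, by omega, hiL, hiR, fun j hj => hle j (by omega)⟩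
  have hKmainPair : ∀ u v : Word, u.length = l' → v.length = l' → lexLe u v → compatible u v →
      compatPair (u ++ [e (u.take l)]) (v ++ [e (v.take l)]) := by
    intro u v hu hv hle hc
    have hlen : u.length = v.length := by omega
    have hpu := htakelen u hu
    have hpv := htakelen v hv
    have hcp : compatPair u v := compatPair_of_compatible_of_le hlen hc hle
    have hpq : compatible (u.take l) (v.take l) := compatible_take hlen (by omega) hc
    have hpq' := hF3 _ _ hpu hpv hpq
    have hlepq : lexLe (u.take l) (v.take l) := lexLe_take hlen (by omega) hle
    have hlep' : lexLe (u.take l ++ [e (u.take l)]) (v.take l ++ [e (v.take l)]) :=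
      (hlex_app _ _ _ _ (by omega) (fun h => by rw [h])).mp hlepq
    have hcp' : compatPair (u.take l ++ [e (u.take l)]) (v.take l ++ [e (v.take l)]) :=
      compatPair_of_compatible_of_le (by simp [hpu, hpv]) hpq' hlep'
    have hab1 : ¬ (e (u.take l) = Sig.R ∧ e (v.take l) = Sig.L) := by
      have := hcp'.1 l (by simp only [List.length_append, List.length_singleton, hpu, hpv]; omega)
      rwa [idx_append_of_len _ hpu, idx_append_of_len _ hpv] at this
    constructor
    · intro i hi
      simp only [List.length_append, List.length_singleton] at hi
      rcases Nat.lt_or_ge i l' with hil | hil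
      · intro hcon
        rw [idx_append_lt _ _ (by omega), idx_append_lt _ _ (by omega)] at hcon
        exact hcp.1 i (by omega) hcon
      · have hieq : i = l' := by omega
        subst hieq
        rw [idx_append_of_len _ hu, idx_append_of_len _ hv]
        exact hab1
    · rintro ⟨i, hi, hL, hR⟩ j hj
      simp only [List.length_append, List.length_singleton] at hi hj
      have hall : (∀ k, k < l' → Sig.le (idx u k) (idx v k)) ∧
          Sig.le (e (u.take l)) (e (v.take l)) := by
        rcases Nat.lt_or_ge i l' with hil | hil
        · rw [idx_append_lt _ _ (by omega)] at hL
          rw [idx_append_lt _ _ (by omega)] at hR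
          have hallu : ∀ k, k < min u.length v.length → Sig.le (idx u k) (idx v k) :=
            hcp.2 ⟨i, by omega, hL, hR⟩
          have htlq : trleq (u.take l) (v.take l) := by
            refine ⟨by simp only [List.length_take]; omega, fun k hk => ?_⟩
            rw [hpu] at hk
            rw [idx_take hk, idx_take hk]
            exact hallu k (by omega)
          exact ⟨fun k hk => hallu k (by omega), hF2 _ _ hpu hpv htlq⟩
        · have hieq : i = l' := by omega
          subst hieq
          rw [idx_append_of_len _ hu] at hL
          rw [idx_append_of_len _ hv] at hR
          have hLp : idx (u.take l ++ [e (u.take l)]) l = Sig.L := by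
            rw [idx_append_of_len _ hpu]
            exact hL
          have hRp : idx (v.take l ++ [e (v.take l)]) l = Sig.R := by
            rw [idx_append_of_len _ hpv]
            exact hR
          have hallp := hcp'.2 ⟨l,
            by simp only [List.length_append, List.length_singleton, hpu, hpv]; omega, hLp, hRp⟩
          have hple : ∀ j, j < l → Sig.le (idx (u.take l) j) (idx (v.take l) j) := by
            intro k hk
            have := hallp k
              (by simp only [List.length_append, List.length_singleton, hpu, hpv]; omega)
            rwa [idx_append_lt _ _ (by omega), idx_append_lt _ _ (by omega)] at this
          obtain ⟨i0, hi0u, hi0v, hiL, hiR, _⟩ := hF1 _ _ hpu hpv hple hL hR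
          rw [hpu] at hi0u
          rw [idx_take hi0u] at hiL
          rw [idx_take hi0u] at hiR
          have hallu := hcp.2 ⟨i0, by omega, hiL, hiR⟩
          refine ⟨fun k hk => hallu k (by omega), ?_⟩
          rw [hL, hR]
          exact Nat.zero_le _
      rcases Nat.lt_or_ge j l' with hjl | hjl
      · rw [idx_append_lt _ _ (by omega), idx_append_lt _ _ (by omega)]
        exact hall.1 j hjl
      · have hjeq : j = l' := by omega
        subst hjeq
        rw [idx_append_of_len _ hu, idx_append_of_len _ hv]
        exact hall.2
  have hKcompat : ∀ u v : Word, u.length = l' → v.length = l' → compatible u v →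
      compatible (u ++ [e (u.take l)]) (v ++ [e (v.take l)]) := by
    intro u v hu hv hc
    rcases lexLt_trichotomy_len (show u.length = v.length by omega) with hlt | heq | hlt
    · exact Or.inl ⟨Or.inl ((lexLt_append _ _ (by omega)).mpr (Or.inl hlt)),
        hKmainPair u v hu hv (Or.inl hlt) hc⟩
    · subst heq
      exact Or.inl ⟨Or.inr rfl, compatPair_refl _⟩
    · exact Or.inr ⟨Or.inl ((lexLt_append _ _ (by omega)).mpr (Or.inl hlt)),
        hKmainPair v u hv hu (Or.inl hlt) (compatible_symm hc)⟩
  have hφ'bij : Set.BijOn (fun w : Word => w ++ [e (w.take l)]) {w : Word | w.length = l'}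
      (extSet {w : Word | w.length = l'} (fun v => e (v.take l))) := by
    refine ⟨fun w hw => ⟨w, hw, rfl⟩, fun u hu v hv heq => ?_, fun x hx => ?_⟩
    · exact (List.append_inj' heq rfl).1
    · obtain ⟨y, hy, rfl⟩ := hx
      exact ⟨y, hy, rfl⟩
  have hIso' : LevelIso {w : Word | w.length = l'}
      (extSet {w : Word | w.length = l'} (fun v => e (v.take l))) := by
    refine ⟨fun w => w ++ [e (w.take l)], hφ'bij, ?_⟩
    intro u hu v hv
    have hu' : u.length = l' := hu
    have hv' : v.length = l' := hv
    refine ⟨?_, ?_, hlex_app u v _ _ (by omega) (fun h => by rw [h])⟩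
    · constructor
      · rintro (hprec | heq)
        · exact Or.inl ((prec_append _ _ (by omega)).mpr (Or.inl hprec))
        · subst heq
          exact Or.inr rfl
      · rintro (hprec | heq)
        · rcases (prec_append _ _ (by omega)).mp hprec with hp | ⟨hple, hL, hR⟩
          · exact Or.inl hp
          · exact Or.inl (hK1 u v hu' hv' (fun j hj => hple j (by omega)) hL hR)
        · exact Or.inr (List.append_inj' heq rfl).1
    · rw [trleq_append _ _ (by omega)]
      constructor
      · intro ht
        exact ⟨ht, hK2 u v hu' hv' ht⟩
      · exact And.left
  rintro (hi1 | hi2 | hi3)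
  · rw [hcl1', hcl2'] at hi1
    exact hi1 hIso'
  · obtain ⟨u, hu, v, hv, hnc, hcmp⟩ := hi2
    rw [hcl2'] at hu hv
    obtain ⟨x, hx, rfl⟩ := hu
    obtain ⟨y, hy, rfl⟩ := hv
    have hx' : x.length = l' := hx
    have hy' : y.length = l' := hy
    rw [take_append_of_len _ hx', take_append_of_len _ hy'] at hcmp
    exact hnc (hKcompat x y hx' hy' hcmp)
  · obtain ⟨u, hu, hlen⟩ := hi3
    obtain ⟨x, hx, rfl⟩ := hu
    have hx' : x.length = l' := hx
    simp only [List.length_append, List.length_singleton] at hlen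
    omega
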